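/- Let U and V⊥ be closed subspaces of H with dim(U) = dim(V⊥) = n < ∞ and cos(θ_{U,V⊥}) > 0. Then cos(θ_{V⊥,U}) ≥ cos(θ_{U,V⊥}) > 0. -/

import Mathlib

open Submodule
open scoped ComplexInnerProductSpace

variable {H : Type*}

/-- The cosine of the subspace angle `θ_{U,W}` between subspaces `U` and `W`:
`cos θ_{U,W} = inf_{u ∈ U, ‖u‖ = 1} ‖Q_W u‖`. -/
noncomputable def cosAngle [NormedAddCommGroup H] [InnerProductSpace ℂ H]
    (U W : Submodule ℂ H) [HasOrthogonalProjection W] : ℝ :=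
  sInf {r : ℝ | ∃ u ∈ U, ‖u‖ = 1 ∧ r = ‖(orthogonalProjection W u : H)‖}

set_option maxHeartbeats 800000 in
set_option synthInstance.maxHeartbeats 400000 in
/-- if `dim U = dim Vᗮ = n < ∞` and `cos θ_{U,Vᗮ} > 0`, then
`cos θ_{Vᗮ,U} ≥ cos θ_{U,Vᗮ} > 0`. -/
theorem stmt4 [NormedAddCommGroup H] [InnerProductSpace ℂ H] [CompleteSpace H]
    (U V : Submodule ℂ H) (hU : IsClosed (U : Set H)) (hV : IsClosed (V : Set H))
    [HasOrthogonalProjection U] [HasOrthogonalProjection Vᗮ]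
    [FiniteDimensional ℂ U] [FiniteDimensional ℂ Vᗮ] (n : ℕ)
    (hdimU : Module.finrank ℂ U = n) (hdimV : Module.finrank ℂ Vᗮ = n)
    (hangle : 0 < cosAngle U Vᗮ) :
    cosAngle U Vᗮ ≤ cosAngle Vᗮ U ∧ 0 < cosAngle Vᗮ U := by
  classical
  set c := cosAngle U Vᗮ with hc
  set S1 := {r : ℝ | ∃ u ∈ U, ‖u‖ = 1 ∧ r = ‖(orthogonalProjection Vᗮ u : H)‖} with hS1
  have hbdd1 : BddBelow S1 := by
    refine ⟨0, ?_⟩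
    rintro r ⟨u, hu, h1, rfl⟩
    positivity
  -- Step 1: lower bound for the projection onto Vᗮ on U
  have key : ∀ u : H, u ∈ U → c * ‖u‖ ≤ ‖(orthogonalProjection Vᗮ u : H)‖ := by
    intro u hu
    rcases eq_or_ne u 0 with rfl | hne
    · simp
    · have hun : ‖u‖ ≠ 0 := norm_ne_zero_iff.mpr hne
      have h1 : ‖((‖u‖⁻¹ : ℂ)) • u‖ = 1 := by
        rw [norm_smul]
        simp [abs_of_nonneg (norm_nonneg u), inv_mul_cancel₀ hun]
      have hmem : ‖(orthogonalProjection Vᗮ (((‖u‖⁻¹ : ℂ)) • u) : H)‖ ∈ S1 :=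
        ⟨((‖u‖⁻¹ : ℂ)) • u, U.smul_mem _ hu, h1, rfl⟩
      have hle : c ≤ ‖(orthogonalProjection Vᗮ (((‖u‖⁻¹ : ℂ)) • u) : H)‖ :=
        csInf_le hbdd1 hmem
      have hsmul : (orthogonalProjection Vᗮ (((‖u‖⁻¹ : ℂ)) • u) : H)
          = (‖u‖⁻¹ : ℂ) • (orthogonalProjection Vᗮ u : H) := by
        rw [map_smul]; rfl
      rw [hsmul, norm_smul] at hle
      have : c ≤ ‖u‖⁻¹ * ‖(orthogonalProjection Vᗮ u : H)‖ := by
        simpa [abs_of_nonneg (norm_nonneg u)] using hle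
      have hpos : (0:ℝ) < ‖u‖ := lt_of_le_of_ne (norm_nonneg u) (Ne.symm hun)
      calc c * ‖u‖ ≤ (‖u‖⁻¹ * ‖(orthogonalProjection Vᗮ u : H)‖) * ‖u‖ := by
            exact mul_le_mul_of_nonneg_right this (le_of_lt hpos)
        _ = ‖(orthogonalProjection Vᗮ u : H)‖ := by
            field_simp
  -- the linear map T : U → Vᗮ
  let T : U →ₗ[ℂ] Vᗮ :=
    (orthogonalProjection Vᗮ).toLinearMap.comp (U.subtype)
  have hTapp : ∀ x : U, (T x : H) = (orthogonalProjection Vᗮ (x : H) : H) := fun x => rfl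
  have hTinj : Function.Injective T := by
    rw [injective_iff_map_eq_zero]
    intro x hx
    have h0 : ‖(orthogonalProjection Vᗮ (x : H) : H)‖ = 0 := by
      rw [← hTapp, hx]; simp
    have := key (x : H) x.2
    rw [h0] at this
    have hx0 : ‖(x : H)‖ = 0 := by
      nlinarith [norm_nonneg (x : H)]
    ext1
    simpa using norm_eq_zero.mp hx0
  have hTsurj : Function.Surjective T :=
    (LinearMap.injective_iff_surjective_of_finrank_eq_finrank
      (by rw [hdimU, hdimV])).mp hTinj
  -- Step 2: for every unit w ∈ Vᗮ, c ≤ ‖P_U w‖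
  have key2 : ∀ w : H, w ∈ Vᗮ → ‖w‖ = 1 → c ≤ ‖(orthogonalProjection U w : H)‖ := by
    intro w hw hw1
    obtain ⟨u, hu⟩ := hTsurj ⟨w, hw⟩
    have huH : (orthogonalProjection Vᗮ ((u : U) : H) : H) = w := by
      rw [← hTapp, hu]
    have hinner1 : (inner ℂ w ((u : U) : H) : ℂ) = 1 := by
      have h := inner_starProjection_left_eq_right Vᗮ w ((u : U) : H)
      rw [starProjection_eq_self_iff.mpr hw, starProjection_apply, huH] at h
      rw [h, inner_self_eq_norm_sq_to_K, hw1]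
      norm_num
    have hinner2 : (inner ℂ ((orthogonalProjection U w : H)) ((u : U) : H) : ℂ) = 1 := by
      have h := inner_starProjection_left_eq_right U w ((u : U) : H)
      rw [starProjection_eq_self_iff.mpr (u : U).2, starProjection_apply] at h
      rw [h, hinner1]
    have hCS : (1:ℝ) ≤ ‖(orthogonalProjection U w : H)‖ * ‖((u : U) : H)‖ := by
      have := norm_inner_le_norm (𝕜 := ℂ) (orthogonalProjection U w : H) ((u : U) : H)
      rw [hinner2] at this
      simpa using this
    have hkey : c * ‖((u : U) : H)‖ ≤ 1 := by
      have := key ((u : U) : H) (u : U).2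
      rw [huH, hw1] at this
      exact this
    have hupos : (0:ℝ) < ‖((u : U) : H)‖ := by
      by_contra hcon
      push_neg at hcon
      have : ‖((u : U) : H)‖ = 0 := le_antisymm hcon (norm_nonneg _)
      rw [this, mul_zero] at hCS
      linarith
    have : c * ‖((u : U) : H)‖ ≤ ‖(orthogonalProjection U w : H)‖ * ‖((u : U) : H)‖ := by
      nlinarith [norm_nonneg (orthogonalProjection U w : H)]
    exact le_of_mul_le_mul_right this hupos
  -- Nonemptiness of the second infimum set
  have hn : n ≠ 0 := by
    intro h0
    have hUbot : U = ⊥ := Submodule.finrank_eq_zero.mp (by rw [hdimU, h0])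
    have : S1 = ∅ := by
      ext r
      simp only [hS1, Set.mem_setOf_eq, Set.mem_empty_iff_false, iff_false]
      rintro ⟨u, hu, h1, -⟩
      rw [hUbot, Submodule.mem_bot] at hu
      rw [hu] at h1
      simp at h1
    rw [hc, cosAngle, ← hS1, this, Real.sInf_empty] at hangle
    exact lt_irrefl 0 hangle
  have hVne : Vᗮ ≠ ⊥ := by
    intro h
    rw [h] at hdimV
    simp only [finrank_bot] at hdimV
    exact hn hdimV.symm
  obtain ⟨w0, hw0mem, hw0ne⟩ := Submodule.exists_mem_ne_zero_of_ne_bot hVne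
  have hw0n : ‖w0‖ ≠ 0 := norm_ne_zero_iff.mpr hw0ne
  have hw0unit : ‖((‖w0‖⁻¹ : ℂ)) • w0‖ = 1 := by
    rw [norm_smul]
    simp [abs_of_nonneg (norm_nonneg w0), inv_mul_cancel₀ hw0n]
  have hS2ne : {r : ℝ | ∃ u ∈ Vᗮ, ‖u‖ = 1 ∧ r = ‖(orthogonalProjection U u : H)‖}.Nonempty :=
    ⟨_, ((‖w0‖⁻¹ : ℂ)) • w0, Vᗮ.smul_mem _ hw0mem, hw0unit, rfl⟩
  have hfinal : c ≤ cosAngle Vᗮ U := by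
    rw [cosAngle]
    apply le_csInf hS2ne
    rintro r ⟨w, hw, hw1, rfl⟩
    exact key2 w hw hw1
  exact ⟨hfinal, lt_of_lt_of_le hangle hfinal⟩
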